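/- Let B be any real 8×8 matrix with 8×8 DCT B̂_8 = T_8 · B · T_8ᵀ, and for r, c ∈ {0,1} let B^{(r,c)} = E_r · B · E_cᵀ be its four 4×4 sub-blocks. Define Û_4 = T_8 · U_4 · T_4ᵀ. Then for all r, c ∈ {0,1}: Û_4 · ((T_4 · E_r · T_8ᵀ) · B̂_8 · (T_4 · E_c · T_8ᵀ)ᵀ) · Û_4ᵀ = T_8 · (U_4 · B^{(r,c)} · U_4ᵀ) · T_8ᵀ. That is, first applying the sub-block conversion to the 8×8 DCT block and then the DCT-domain upsampling matrix Û_4 yields exactly the 8×8 DCT of the nearest-neighbor upsampled 4×4 pixel sub-block, entirely in the DCT domain. -/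

import Mathlib

open Matrix

/-- The orthonormal type-II DCT basis matrix `T_N`. -/
noncomputable def dctMatrix (N : ℕ) : Matrix (Fin N) (Fin N) ℝ :=
  fun i j => Real.sqrt (2 / N) * (if (i : ℕ) = 0 then 1 / Real.sqrt 2 else 1) *
    Real.cos ((2 * (j : ℕ) + 1) * (i : ℕ) * Real.pi / (2 * N))

/-- The nearest-neighbor upsampling matrix `U_N ∈ ℝ^{2N × N}`. -/
def upMatrix (N : ℕ) : Matrix (Fin (2 * N)) (Fin N) ℝ :=
  fun i j => if (j : ℕ) = (i : ℕ) / 2 then 1 else 0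

/-- The row-selection matrices `E_r ∈ ℝ^{4×8}` for `r ∈ {0,1}`:
`(E_r)_{i,j} = 1` iff `j = i + 4r`. -/
def selMatrix (r : Fin 2) : Matrix (Fin 4) (Fin 8) ℝ :=
  fun i j => if (j : ℕ) = (i : ℕ) + 4 * (r : ℕ) then 1 else 0

section DCTAux
open Complex Finset

lemma sum_exp_re (θ : ℝ) (N : ℕ) :
    ∑ i ∈ range N, Real.cos (i * θ) = (∑ i ∈ range N, Complex.exp (θ * I) ^ i).re := by
  rw [Complex.re_sum]
  refine Finset.sum_congr rfl fun i _ => ?_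
  rw [← Complex.exp_nat_mul]
  have : (i : ℂ) * (θ * I) = ((i * θ : ℝ) : ℂ) * I := by push_cast; ring
  rw [this, Complex.exp_ofReal_mul_I_re]

lemma sum_cos_neg_one {θ : ℝ} {N : ℕ} (h : Complex.exp ((N : ℝ) * θ * I) = -1) :
    ∑ i ∈ range N, Real.cos (i * θ) = 1 := by
  set z := Complex.exp (θ * I) with hz
  have hzN : z ^ N = -1 := by
    rw [hz, ← Complex.exp_nat_mul]
    convert h using 2
    push_cast; ring
  have hz1 : z ≠ 1 := by
    intro hh
    rw [hh, one_pow] at hzN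
    norm_num at hzN
  have habs : Complex.normSq z = 1 := by
    have := Complex.norm_exp_ofReal_mul_I θ
    rw [← hz] at this
    rw [← Complex.sq_norm, this, one_pow]
  have hre : z.re ≠ 1 := by
    intro hh
    apply hz1
    have him : z.im = 0 := by
      have : z.re * z.re + z.im * z.im = 1 := by simpa [Complex.normSq_apply] using habs
      nlinarith
    exact Complex.ext hh him
  rw [sum_exp_re, geom_sum_eq hz1, hzN]
  have hns : Complex.normSq (z - 1) = 2 - 2 * z.re := by
    simp [Complex.normSq_apply, Complex.sub_re, Complex.sub_im]
    have : z.re * z.re + z.im * z.im = 1 := by simpa [Complex.normSq_apply] using habs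
    ring_nf
    nlinarith [this]
  rw [Complex.div_re, hns]
  simp [Complex.sub_re, Complex.sub_im]
  have h2 : 2 - 2 * z.re ≠ 0 := by intro hh; apply hre; linarith
  field_simp
  ring

lemma sum_cos_one {θ : ℝ} {N : ℕ} (hz : Complex.exp (θ * I) ≠ 1)
    (h : Complex.exp ((N : ℝ) * θ * I) = 1) :
    ∑ i ∈ range N, Real.cos (i * θ) = 0 := by
  have hzN : Complex.exp (θ * I) ^ N = 1 := by
    rw [← Complex.exp_nat_mul]
    convert h using 2
    push_cast; ring
  rw [sum_exp_re, geom_sum_eq hz, hzN]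
  simp

lemma exp_int_pi (m : ℤ) : Complex.exp ((m : ℂ) * (Real.pi : ℂ) * I) = (-1 : ℂ) ^ m := by
  rw [mul_assoc, Complex.exp_int_mul, Complex.exp_pi_mul_I]

lemma theta_exp {N : ℕ} (hN : 0 < N) (m : ℤ) :
    Complex.exp (((N : ℝ) : ℂ) * ((((m : ℝ) * Real.pi / N : ℝ)) : ℂ) * I) = (-1 : ℂ) ^ m := by
  have hN' : (N : ℂ) ≠ 0 := Nat.cast_ne_zero.mpr hN.ne'
  have h : ((N : ℝ) : ℂ) * ((((m : ℝ) * Real.pi / N : ℝ)) : ℂ) = (m : ℂ) * (Real.pi : ℂ) := by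
    push_cast
    rw [mul_div_assoc', mul_comm, mul_div_assoc, div_self hN', mul_one]
  rw [h, exp_int_pi]

lemma S_odd {N : ℕ} (hN : 0 < N) {m : ℤ} (hm : Odd m) :
    ∑ i ∈ range N, Real.cos (i * ((m : ℝ) * Real.pi / N)) = 1 := by
  apply sum_cos_neg_one
  rw [theta_exp hN m, hm.neg_one_zpow]

lemma S_even {N : ℕ} (hN : 0 < N) {m : ℤ} (hm : Even m) (h0 : m ≠ 0)
    (hlt : |m| < 2 * N) :
    ∑ i ∈ range N, Real.cos (i * ((m : ℝ) * Real.pi / N)) = 0 := by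
  have hN' : (N : ℝ) ≠ 0 := Nat.cast_ne_zero.mpr hN.ne'
  apply sum_cos_one
  · intro hcontra
    rw [Complex.exp_eq_one_iff] at hcontra
    obtain ⟨n, hn⟩ := hcontra
    have hn' : (((m : ℝ) * Real.pi / N : ℝ) : ℂ) = (n : ℂ) * (2 * Real.pi) := by
      push_cast at hn ⊢
      linear_combination (-I) * hn +
        ((m : ℂ) * Real.pi / N - 2 * n * Real.pi) * Complex.I_sq
    have hr : (m : ℝ) * Real.pi / N = (n : ℝ) * (2 * Real.pi) := by
      exact_mod_cast hn'
    have hmn : (m : ℝ) = 2 * n * N := by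
      have hpi := Real.pi_ne_zero
      field_simp at hr
      have h2 : (m : ℝ) * Real.pi = (2 * n * N : ℝ) * Real.pi := by linear_combination Real.pi * hr
      exact mul_right_cancel₀ hpi h2
    have hmz : m = 2 * n * N := by exact_mod_cast hmn
    rcases eq_or_ne n 0 with h | h
    · simp [h] at hmz; exact h0 hmz
    · have hn1 : (1 : ℤ) ≤ |n| := Int.one_le_abs h
      have habs : |m| = 2 * |n| * N := by
        rw [hmz, abs_mul, abs_mul, _root_.abs_two, abs_of_nonneg (Int.natCast_nonneg N)]
      have hN1 : (1 : ℤ) ≤ (N : ℤ) := by exact_mod_cast hN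
      nlinarith [hn1, habs, hlt, hN1]
  · rw [theta_exp hN m, hm.neg_one_zpow]
lemma weight_sum {N : ℕ} (hN : 0 < N) (θ : ℝ) :
    ∑ i ∈ range N, (if i = 0 then (1 : ℝ)/2 else 1) * Real.cos (i * θ)
      = (∑ i ∈ range N, Real.cos (i * θ)) - 1/2 := by
  have h : ∀ i ∈ range N, (if i = 0 then (1 : ℝ)/2 else 1) * Real.cos (i * θ)
      = Real.cos (i * θ) - (if i = 0 then (1 : ℝ)/2 else 0) := by
    intro i _
    rcases eq_or_ne i 0 with h | h
    · simp [h]; norm_num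
    · simp [h]
  rw [Finset.sum_congr rfl h, Finset.sum_sub_distrib,
    Finset.sum_ite_eq' (range N) 0 (fun _ => (1 : ℝ)/2)]
  simp [Finset.mem_range.mpr hN]

lemma dct_orth {N : ℕ} (hN : 0 < N) : (dctMatrix N)ᵀ * dctMatrix N = 1 := by
  have hNr : (N : ℝ) ≠ 0 := Nat.cast_ne_zero.mpr hN.ne'
  ext j k
  rw [Matrix.mul_apply, Matrix.one_apply]
  set m1 : ℤ := (j : ℕ) + (k : ℕ) + 1 with hm1
  set m2 : ℤ := (j : ℕ) - (k : ℕ) with hm2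
  have key : ∀ i : Fin N, (dctMatrix N)ᵀ j i * dctMatrix N i k
      = 1/(N : ℝ) * ((if (i : ℕ) = 0 then (1 : ℝ)/2 else 1) *
        (Real.cos ((i : ℕ) * ((m1 : ℝ) * Real.pi / N))
          + Real.cos ((i : ℕ) * ((m2 : ℝ) * Real.pi / N)))) := by
    intro i
    simp only [Matrix.transpose_apply, dctMatrix]
    have hs : Real.sqrt (2 / N) * Real.sqrt (2 / N) = 2 / N :=
      Real.mul_self_sqrt (by positivity)
    have e1 : (2 * (j : ℕ) + 1) * (i : ℕ) * Real.pi / (2 * N)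
        + (2 * (k : ℕ) + 1) * (i : ℕ) * Real.pi / (2 * N)
        = (i : ℕ) * ((m1 : ℝ) * Real.pi / N) := by
      simp only [hm1]; push_cast; field_simp; ring
    have e2 : (2 * (j : ℕ) + 1) * (i : ℕ) * Real.pi / (2 * N)
        - (2 * (k : ℕ) + 1) * (i : ℕ) * Real.pi / (2 * N)
        = (i : ℕ) * ((m2 : ℝ) * Real.pi / N) := by
      simp only [hm2]; push_cast; field_simp; ring
    have hc : Real.cos ((2 * (j : ℕ) + 1) * (i : ℕ) * Real.pi / (2 * N))
        * Real.cos ((2 * (k : ℕ) + 1) * (i : ℕ) * Real.pi / (2 * N))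
        = (Real.cos ((i : ℕ) * ((m1 : ℝ) * Real.pi / N))
          + Real.cos ((i : ℕ) * ((m2 : ℝ) * Real.pi / N))) / 2 := by
      rw [← e1, ← e2, Real.cos_add, Real.cos_sub]; ring
    have h2 : (1 / Real.sqrt 2) * (1 / Real.sqrt 2) = 1/2 := by
      rw [div_mul_div_comm, one_mul, Real.mul_self_sqrt (by norm_num)]
    split_ifs with h
    · calc (Real.sqrt (2/N) * (1/Real.sqrt 2) * Real.cos ((2 * (j : ℕ) + 1) * (i : ℕ) * Real.pi / (2 * N)))
            * (Real.sqrt (2/N) * (1/Real.sqrt 2) * Real.cos ((2 * (k : ℕ) + 1) * (i : ℕ) * Real.pi / (2 * N)))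
          = (Real.sqrt (2/N) * Real.sqrt (2/N)) * ((1/Real.sqrt 2) * (1/Real.sqrt 2))
            * (Real.cos ((2 * (j : ℕ) + 1) * (i : ℕ) * Real.pi / (2 * N))
              * Real.cos ((2 * (k : ℕ) + 1) * (i : ℕ) * Real.pi / (2 * N))) := by ring
        _ = (2/N) * (1/2) * ((Real.cos ((i : ℕ) * ((m1 : ℝ) * Real.pi / N))
              + Real.cos ((i : ℕ) * ((m2 : ℝ) * Real.pi / N))) / 2) := by rw [hs, h2, hc]
        _ = 1/(N : ℝ) * ((1 : ℝ)/2 * (Real.cos ((i : ℕ) * ((m1 : ℝ) * Real.pi / N))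
              + Real.cos ((i : ℕ) * ((m2 : ℝ) * Real.pi / N)))) := by ring
    · calc (Real.sqrt (2/N) * 1 * Real.cos ((2 * (j : ℕ) + 1) * (i : ℕ) * Real.pi / (2 * N)))
            * (Real.sqrt (2/N) * 1 * Real.cos ((2 * (k : ℕ) + 1) * (i : ℕ) * Real.pi / (2 * N)))
          = (Real.sqrt (2/N) * Real.sqrt (2/N))
            * (Real.cos ((2 * (j : ℕ) + 1) * (i : ℕ) * Real.pi / (2 * N))
              * Real.cos ((2 * (k : ℕ) + 1) * (i : ℕ) * Real.pi / (2 * N))) := by ring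
        _ = (2/N) * ((Real.cos ((i : ℕ) * ((m1 : ℝ) * Real.pi / N))
              + Real.cos ((i : ℕ) * ((m2 : ℝ) * Real.pi / N))) / 2) := by rw [hs, hc]
        _ = 1/(N : ℝ) * ((1 : ℝ) * (Real.cos ((i : ℕ) * ((m1 : ℝ) * Real.pi / N))
              + Real.cos ((i : ℕ) * ((m2 : ℝ) * Real.pi / N)))) := by ring
  rw [Finset.sum_congr rfl (fun i _ => key i), ← Finset.mul_sum]
  rw [Fin.sum_univ_eq_sum_range (fun i => (if i = 0 then (1 : ℝ)/2 else 1) *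
        (Real.cos (i * ((m1 : ℝ) * Real.pi / N))
          + Real.cos (i * ((m2 : ℝ) * Real.pi / N)))) N]
  have hsplit : ∑ i ∈ range N, (if i = 0 then (1 : ℝ)/2 else 1) *
        (Real.cos (i * ((m1 : ℝ) * Real.pi / N))
          + Real.cos (i * ((m2 : ℝ) * Real.pi / N)))
      = ((∑ i ∈ range N, Real.cos (i * ((m1 : ℝ) * Real.pi / N))) - 1/2)
        + ((∑ i ∈ range N, Real.cos (i * ((m2 : ℝ) * Real.pi / N))) - 1/2) := by
    rw [← weight_sum hN, ← weight_sum hN, ← Finset.sum_add_distrib]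
    exact Finset.sum_congr rfl fun i _ => by ring
  rw [hsplit]
  by_cases hjk : j = k
  · subst hjk
    rw [if_pos rfl]
    have hm2z : m2 = 0 := by rw [hm2]; ring
    have hS2 : ∑ i ∈ range N, Real.cos (i * ((m2 : ℝ) * Real.pi / N)) = N := by
      simp [hm2z]
    have hS1 : ∑ i ∈ range N, Real.cos (i * ((m1 : ℝ) * Real.pi / N)) = 1 :=
      S_odd hN ⟨(j : ℕ), by rw [hm1]; ring⟩
    rw [hS1, hS2]
    field_simp
    ring
  · rw [if_neg hjk]
    have hvne : (j : ℕ) ≠ (k : ℕ) := fun h => hjk (Fin.ext h)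
    have hm2ne : m2 ≠ 0 := by rw [hm2]; omega
    have hjN := j.isLt
    have hkN := k.isLt
    have hm2lt : |m2| < 2 * N := by rw [hm2, abs_lt]; constructor <;> omega
    have hm1ne : m1 ≠ 0 := by rw [hm1]; omega
    have hm1lt : |m1| < 2 * N := by rw [hm1, abs_lt]; constructor <;> omega
    have hrel : m1 = m2 + 2 * (k : ℕ) + 1 := by rw [hm1, hm2]; ring
    rcases Int.even_or_odd m2 with h | h
    · have hm1odd : Odd m1 := by
        rcases h with ⟨t, ht⟩
        exact ⟨t + (k : ℕ), by rw [hrel, ht]; ring⟩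
      rw [S_odd hN hm1odd, S_even hN h hm2ne hm2lt]
      ring
    · have hm1even : Even m1 := by
        rcases h with ⟨t, ht⟩
        exact ⟨t + (k : ℕ) + 1, by rw [hrel, ht]; ring⟩
      rw [S_even hN hm1even hm1ne hm1lt, S_odd hN h]
      ring

lemma mul_mul_cancel {N : ℕ} {X Y : Matrix (Fin N) (Fin N) ℝ} (h : X * Y = 1)
    {m : Type*} [Fintype m] (M : Matrix (Fin N) m ℝ) : X * (Y * M) = M := by
  rw [← Matrix.mul_assoc, h, Matrix.one_mul]

end DCTAux

/-- Applying the sub-block conversion to the 8×8 DCT block `B̂_8 = T_8 * B * T_8ᵀ` and then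
the DCT-domain upsampling matrix `Û_4 = T_8 * U_4 * T_4ᵀ` yields exactly the 8×8 DCT of
the nearest-neighbor upsampled 4×4 pixel sub-block `B^{(r,c)} = E_r * B * E_cᵀ`. -/
theorem dct_domain_subblock_upsampling (B : Matrix (Fin 8) (Fin 8) ℝ) (r c : Fin 2) :
    (dctMatrix 8 * upMatrix 4 * (dctMatrix 4)ᵀ) *
        ((dctMatrix 4 * selMatrix r * (dctMatrix 8)ᵀ) * (dctMatrix 8 * B * (dctMatrix 8)ᵀ) *
          (dctMatrix 4 * selMatrix c * (dctMatrix 8)ᵀ)ᵀ) *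
        (dctMatrix 8 * upMatrix 4 * (dctMatrix 4)ᵀ)ᵀ =
      dctMatrix 8 * (upMatrix 4 * (selMatrix r * B * (selMatrix c)ᵀ) * (upMatrix 4)ᵀ) *
        (dctMatrix 8)ᵀ := by
  have h4 : (dctMatrix 4)ᵀ * dctMatrix 4 = 1 := dct_orth (by norm_num)
  have h8 : (dctMatrix 8)ᵀ * dctMatrix 8 = 1 := dct_orth (by norm_num)
  simp only [Matrix.transpose_mul, Matrix.transpose_transpose, Matrix.mul_assoc]
  rw [mul_mul_cancel h4, mul_mul_cancel h8, mul_mul_cancel h8, mul_mul_cancel h4]
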